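/- For all m, n, k with 1 ≤ n < m and 1 ≤ k < m, the word E_{1,n} · δ_m · E_{1,m} · δ_m · E_{1,k} is a palindrome if and only if n = k. -/

import Mathlib

/-- The alphabet: letters a, b (for the period-doubling sequence) and c (used by Θ₂). -/
inductive Letter : Type
  | a | b | c
deriving DecidableEq, Repr

open Letter

/-- The period-doubling substitution σ : a ↦ ab, b ↦ aa, extended to words
(the extra letter c is left untouched; it is never produced). -/
def sigmaw : List Letter → List Letter :=
  fun w => w.flatMap fun x => match x with
    | .a => [.a, .b]
    | .b => [.a, .a]
    | .c => [.c]

/-- A_m = σ^m(a). -/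
def A (m : ℕ) : List Letter := sigmaw^[m] [.a]

/-- B_m = σ^m(b). -/
def B (m : ℕ) : List Letter := sigmaw^[m] [.b]

/-- δ_m, the last letter of A_m. -/
def delta (m : ℕ) : Letter := (A m).getLastD .a

/-- The period-doubling sequence D, as a function giving its (n+1)-st letter
(0-indexed); it is the fixed point of σ beginning with a, and A_{n+1} is a
prefix of it of length 2^{n+1} > n. -/
def D (n : ℕ) : Letter := (A (n + 1)).getD n .a

/-- The finite segment D[i .. i+len−1] of the period-doubling sequence,
with 1-based starting position i. -/
def Dseg (i len : ℕ) : List Letter := (List.range len).map fun k => D (i - 1 + k)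

/-- u occurs in the finite word w at (1-based) position i. -/
def OccursAt {α : Type*} (u w : List α) (i : ℕ) : Prop :=
  1 ≤ i ∧ i - 1 + u.length ≤ w.length ∧ (w.drop (i - 1)).take u.length = u

/-- u is a factor of the finite word w. -/
def IsFactor {α : Type*} (u w : List α) : Prop := ∃ i, OccursAt u w i

/-- u occurs in the period-doubling sequence D at (1-based) position i. -/
def DOccursAt (u : List Letter) (i : ℕ) : Prop := 1 ≤ i ∧ Dseg i u.length = u

/-- u is a factor of the period-doubling sequence D. -/
def FactorD (u : List Letter) : Prop := ∃ i, DOccursAt u i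

/-- L(u,p): the starting position of the p-th occurrence (p ≥ 1) of u in D. -/
noncomputable def L (u : List Letter) (p : ℕ) : ℕ := Nat.nth (DOccursAt u) (p - 1)

/-- r_p(u): the p-th return word of u (p ≥ 1), i.e. D[L(u,p) .. L(u,p+1)−1];
r_0(u) is the prefix of D preceding the first occurrence of u. -/
noncomputable def r (u : List Letter) (p : ℕ) : List Letter :=
  if p = 0 then Dseg 1 (L u 1 - 1) else Dseg (L u p) (L u (p + 1) - L u p)

/-- The morphism τ₁ : a ↦ a, b ↦ bb, extended to words. -/
def tau1 : List Letter → List Letter :=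
  fun w => w.flatMap fun x => match x with
    | .a => [.a]
    | .b => [.b, .b]
    | .c => [.c]

/-- The morphism τ₂ : a ↦ ab, b ↦ acac, extended to words. -/
def tau2 : List Letter → List Letter :=
  fun w => w.flatMap fun x => match x with
    | .a => [.a, .b]
    | .b => [.a, .c, .a, .c]
    | .c => [.c]

/-- Θ₁[p], the p-th letter (p ≥ 1) of Θ₁ = τ₁(D): since |τ₁(w)| ≥ |w|, the p-th
letter of Θ₁ is the p-th letter of the image of the length-p prefix of D. -/
def Theta1 (p : ℕ) : Letter := (tau1 (Dseg 1 p)).getD (p - 1) .a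

/-- Θ₂[p], the p-th letter (p ≥ 1) of Θ₂ = τ₂(D). -/
def Theta2 (p : ℕ) : Letter := (tau2 (Dseg 1 p)).getD (p - 1) .a

/-- The envelope word E_{1,m} = A_m with its last letter δ_m deleted. -/
def E1 (m : ℕ) : List Letter := (A m).dropLast

/-- The envelope word E_{2,m} = B_m B_{m−1} with its last letter δ_m deleted. -/
def E2 (m : ℕ) : List Letter := (B m ++ B (m - 1)).dropLast

/-- Enumeration of the envelope words in the order
E_{1,1} ⊏ E_{2,1} ⊏ E_{1,2} ⊏ E_{2,2} ⊏ …. -/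
def Eword (k : ℕ) : List Letter := if k % 2 = 0 then E1 (k / 2 + 1) else E2 (k / 2 + 1)

/-- Env(u): the ⊏-least envelope word having u as a factor. -/
noncomputable def Env (u : List Letter) : List Letter :=
  Eword (sInf {k | IsFactor u (Eword k)})

/-- The letterwise complement exchanging a and b. -/
def comp : Letter → Letter
  | .a => .b
  | .b => .a
  | .c => .c


section Aux

open Letter List

lemma sigmaw_append (u v : List Letter) : sigmaw (u ++ v) = sigmaw u ++ sigmaw v := by
  simp [sigmaw]

lemma iter_sigmaw_append (m : ℕ) (u v : List Letter) :
    sigmaw^[m] (u ++ v) = sigmaw^[m] u ++ sigmaw^[m] v := by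
  induction m generalizing u v with
  | zero => simp
  | succ m ih => rw [Function.iterate_succ_apply, Function.iterate_succ_apply,
      Function.iterate_succ_apply, sigmaw_append, ih]

lemma A_succ' (m : ℕ) : A (m + 1) = A m ++ B m := by
  show sigmaw^[m+1] [Letter.a] = _
  rw [Function.iterate_succ_apply]
  show sigmaw^[m] ([Letter.a] ++ [Letter.b]) = _
  rw [iter_sigmaw_append]; rfl

lemma B_succ' (m : ℕ) : B (m + 1) = A m ++ A m := by
  show sigmaw^[m+1] [Letter.b] = _
  rw [Function.iterate_succ_apply]
  show sigmaw^[m] ([Letter.a] ++ [Letter.a]) = _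
  rw [iter_sigmaw_append]; rfl

lemma length_AB (m : ℕ) : (A m).length = 2 ^ m ∧ (B m).length = 2 ^ m := by
  induction m with
  | zero => exact ⟨rfl, rfl⟩
  | succ m ih =>
    simp [A_succ', B_succ', ih.1, ih.2, pow_succ]; omega

lemma length_A (m : ℕ) : (A m).length = 2 ^ m := (length_AB m).1

lemma A_ne_nil (m : ℕ) : A m ≠ [] := by
  intro h
  have h1 := length_A m
  have h2 : (1:ℕ) ≤ 2 ^ m := Nat.one_le_two_pow
  rw [h, List.length_nil] at h1
  omega

lemma B_ne_nil (m : ℕ) : B m ≠ [] := by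
  intro h
  have h1 := (length_AB m).2
  have h2 : (1:ℕ) ≤ 2 ^ m := Nat.one_le_two_pow
  rw [h, List.length_nil] at h1
  omega

lemma getLast?_AB (m : ℕ) :
    (A m).getLast? = some (if m % 2 = 0 then Letter.a else Letter.b) ∧
    (B m).getLast? = some (if m % 2 = 0 then Letter.b else Letter.a) := by
  induction m with
  | zero => exact ⟨rfl, rfl⟩
  | succ m ih =>
    have hA : (A (m+1)).getLast? = (B m).getLast? := by
      rw [A_succ', List.getLast?_append_of_ne_nil _ (B_ne_nil m)]
    have hB : (B (m+1)).getLast? = (A m).getLast? := by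
      rw [B_succ', List.getLast?_append_of_ne_nil _ (A_ne_nil m)]
    rw [hA, hB, ih.1, ih.2]
    rcases Nat.mod_two_eq_zero_or_one m with h | h <;>
      simp [h, Nat.succ_mod_two_eq_zero_iff, Nat.succ_mod_two_eq_one_iff] <;> omega

lemma delta_val (m : ℕ) : delta m = if m % 2 = 0 then Letter.a else Letter.b := by
  rw [delta, List.getLastD_eq_getLast?, (getLast?_AB m).1]; rfl

lemma delta_succ_ne (n : ℕ) : delta (n + 1) ≠ delta n := by
  rw [delta_val, delta_val]
  rcases Nat.mod_two_eq_zero_or_one n with h | h <;>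
    have h2 : (n+1) % 2 = 1 - n % 2 := by omega
  all_goals simp [h, h2]

lemma A_prefix {n m : ℕ} (h : n ≤ m) : A n <+: A m := by
  induction h with
  | refl => exact List.prefix_refl _
  | step _ ih =>
    rename_i m' _
    exact ih.trans (by rw [A_succ']; exact List.prefix_append _ _)

lemma getD_eq_of_prefix {u v : List Letter} (h : u <+: v) {i : ℕ} (hi : i < u.length)
    (d : Letter) : v.getD i d = u.getD i d := by
  rw [List.getD_eq_getElem _ _ (lt_of_lt_of_le hi h.length_le),
      List.getD_eq_getElem _ _ hi, h.getElem hi]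

lemma getD_last (u : List Letter) (hu : u ≠ []) (d : Letter) :
    u.getD (u.length - 1) d = u.getLast hu := by
  have hl : 0 < u.length := List.length_pos_iff.mpr hu
  rw [List.getD_eq_getElem _ _ (by omega), List.getLast_eq_getElem]

lemma delta_eq_getLast (m : ℕ) : delta m = (A m).getLast (A_ne_nil m) := by
  rw [delta, List.getLastD_eq_getLast?, List.getLast?_eq_getLast (A_ne_nil m)]; rfl

lemma getD_A_pow {j m : ℕ} (h : j ≤ m) (d : Letter) :
    (A m).getD (2 ^ j - 1) d = delta j := by
  have hp := A_prefix h
  have hlen := length_A j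
  have hpos : 0 < 2 ^ j := pow_pos (by norm_num) j
  rw [getD_eq_of_prefix hp (by omega) d]
  have : 2 ^ j - 1 = (A j).length - 1 := by omega
  rw [this, getD_last (A j) (A_ne_nil j), ← delta_eq_getLast]

lemma getD_A_3pow {n k : ℕ} (h : n + 2 ≤ k) (d : Letter) :
    (A k).getD (3 * 2 ^ n - 1) d = delta n := by
  have h2 : A (n + 2) = (A (n+1) ++ A n) ++ A n := by
    rw [A_succ', B_succ', List.append_assoc]
  have hp : (A (n+1) ++ A n) <+: A k := by
    refine List.IsPrefix.trans ?_ (A_prefix h)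
    rw [h2]; exact List.prefix_append _ _
  have hlen : (A (n+1) ++ A n).length = 3 * 2 ^ n := by
    rw [List.length_append, length_A, length_A, pow_succ]; ring
  have hpos : 0 < 2 ^ n := pow_pos (by norm_num) n
  rw [getD_eq_of_prefix hp (by omega) d]
  have hne : (A (n+1) ++ A n) ≠ [] := by
    simp [A_ne_nil]
  have : 3 * 2 ^ n - 1 = (A (n+1) ++ A n).length - 1 := by omega
  rw [this, getD_last _ hne, List.getLast_append_of_ne_nil _ (A_ne_nil n), ← delta_eq_getLast]

lemma length_E1 (m : ℕ) : (E1 m).length = 2 ^ m - 1 := by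
  rw [E1, List.length_dropLast, length_A]

lemma getD_E1 {m i : ℕ} (hi : i < 2 ^ m - 1) (d : Letter) :
    (E1 m).getD i d = (A m).getD i d := by
  have h1 : i < (E1 m).length := by rw [length_E1]; exact hi
  have h2 : i < (A m).length := by rw [length_A]; omega
  rw [List.getD_eq_getElem _ _ h1, List.getD_eq_getElem _ _ h2]
  exact List.getElem_dropLast _

lemma c_not_mem_sigmaw {w : List Letter} (h : Letter.c ∉ w) : Letter.c ∉ sigmaw w := by
  intro hc
  rw [sigmaw, List.mem_flatMap] at hc
  obtain ⟨x, hx, hcx⟩ := hc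
  cases x <;> simp at hcx
  exact h hx

lemma A_succ_sigma (m : ℕ) : A (m + 1) = sigmaw (A m) :=
  Function.iterate_succ_apply' _ _ _

lemma c_not_mem_A (m : ℕ) : Letter.c ∉ A m := by
  induction m with
  | zero => simp [A]
  | succ m ih => rw [A_succ_sigma]; exact c_not_mem_sigmaw ih

lemma rev_sigmaw (w : List Letter) (h : Letter.c ∉ w) :
    Letter.a :: (sigmaw w).reverse = sigmaw w.reverse ++ [Letter.a] := by
  induction w with
  | nil => rfl
  | cons x t ih =>
    have hx : x ≠ Letter.c := fun e => h (e ▸ List.mem_cons_self (a := x) (l := t))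
    have ht : Letter.c ∉ t := fun hm => h (List.mem_cons_of_mem _ hm)
    have hst := ih ht
    cases x with
    | a =>
      have hs : sigmaw (Letter.a :: t) = [Letter.a, Letter.b] ++ sigmaw t := by
        have := sigmaw_append [Letter.a] t
        exact this
      have hs2 : sigmaw (t.reverse ++ [Letter.a]) =
          sigmaw t.reverse ++ [Letter.a, Letter.b] := by
        rw [sigmaw_append]; rfl
      rw [List.reverse_cons, hs, hs2, List.reverse_append]
      have : (Letter.a :: ((sigmaw t).reverse ++ [Letter.a, Letter.b].reverse)) =
          (Letter.a :: (sigmaw t).reverse) ++ [Letter.b, Letter.a] := by simp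
      rw [this, hst, List.append_assoc]
      simp
    | b =>
      have hs : sigmaw (Letter.b :: t) = [Letter.a, Letter.a] ++ sigmaw t := by
        have := sigmaw_append [Letter.b] t
        exact this
      have hs2 : sigmaw (t.reverse ++ [Letter.b]) =
          sigmaw t.reverse ++ [Letter.a, Letter.a] := by
        rw [sigmaw_append]; rfl
      rw [List.reverse_cons, hs, hs2, List.reverse_append]
      have : (Letter.a :: ((sigmaw t).reverse ++ [Letter.a, Letter.a].reverse)) =
          (Letter.a :: (sigmaw t).reverse) ++ [Letter.a, Letter.a] := by simp
      rw [this, hst, List.append_assoc]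
      simp
    | c => exact absurd rfl hx

lemma E1_succ (m : ℕ) : E1 (m + 1) = sigmaw (E1 m) ++ [Letter.a] := by
  have h1 : E1 m ++ [(A m).getLast (A_ne_nil m)] = A m :=
    List.dropLast_append_getLast (A_ne_nil m)
  have h2 : sigmaw (A m) = sigmaw (E1 m) ++ sigmaw [(A m).getLast (A_ne_nil m)] := by
    rw [← sigmaw_append, h1]
  have hδ : (A m).getLast (A_ne_nil m) ≠ Letter.c :=
    fun e => c_not_mem_A m (e ▸ List.getLast_mem (A_ne_nil m))
  show (A (m+1)).dropLast = _
  rw [A_succ_sigma, h2]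
  cases hx : (A m).getLast (A_ne_nil m)
  · rw [List.dropLast_append_of_ne_nil (by simp [sigmaw])]; rfl
  · rw [List.dropLast_append_of_ne_nil (by simp [sigmaw])]; rfl
  · exact absurd hx hδ

lemma c_not_mem_E1 (m : ℕ) : Letter.c ∉ E1 m :=
  fun hm => c_not_mem_A m (List.dropLast_sublist (A m) |>.mem hm)

lemma E1_palindrome (m : ℕ) : (E1 m).reverse = E1 m := by
  induction m with
  | zero => rfl
  | succ m ih =>
    rw [E1_succ, List.reverse_append]
    show Letter.a :: (sigmaw (E1 m)).reverse = _
    rw [rev_sigmaw _ (c_not_mem_E1 m), ih]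

lemma core (m n k : ℕ) (hnk : n < k) (hkm : k < m) :
    E1 n ++ delta m :: E1 m ++ delta m :: E1 k ≠
      E1 k ++ delta m :: E1 m ++ delta m :: E1 n := by
  intro h
  have hc := congrArg (fun l => l.getD (3 * 2 ^ n - 1) Letter.c) h
  have hPn : 0 < 2 ^ n := pow_pos (by norm_num) n
  have hPk : 2 ^ (n+1) ≤ 2 ^ k := Nat.pow_le_pow_right (by norm_num) (by omega)
  have hPm : 2 ^ (n+2) ≤ 2 ^ m := Nat.pow_le_pow_right (by norm_num) (by omega)
  have hp1 : (2:ℕ) ^ (n+1) = 2 ^ n * 2 := pow_succ 2 n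
  have hp2 : (2:ℕ) ^ (n+2) = 2 ^ n * 4 := by rw [pow_succ, pow_succ]; ring
  -- LHS evaluates to delta (n+1)
  have hL : ((E1 n ++ (delta m :: E1 m)) ++ (delta m :: E1 k)).getD (3 * 2 ^ n - 1) Letter.c
      = delta (n + 1) := by
    rw [List.getD_append _ _ _ _ (by simp [length_E1]; omega),
      List.getD_append_right _ _ _ _ (by rw [length_E1]; omega), length_E1]
    have e1 : 3 * 2 ^ n - 1 - (2 ^ n - 1) = (2 ^ (n+1) - 1) + 1 := by omega
    rw [e1, List.getD_cons_succ, getD_E1 (by omega), getD_A_pow (by omega)]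
  -- RHS evaluates to delta n
  have hR : ((E1 k ++ (delta m :: E1 m)) ++ (delta m :: E1 n)).getD (3 * 2 ^ n - 1) Letter.c
      = delta n := by
    rw [List.getD_append _ _ _ _ (by simp [length_E1]; omega)]
    rcases eq_or_lt_of_le (Nat.succ_le_of_lt hnk) with hk1 | hk2
    · -- k = n + 1
      subst hk1
      rw [List.getD_append_right _ _ _ _ (by rw [length_E1]; omega), length_E1]
      have e1 : 3 * 2 ^ n - 1 - (2 ^ (n+1) - 1) = (2 ^ n - 1) + 1 := by omega
      rw [e1, List.getD_cons_succ, getD_E1 (by omega), getD_A_pow (by omega)]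
    · -- n + 2 ≤ k
      have hk2' : n + 2 ≤ k := hk2
      have hPk2 : 2 ^ (n+2) ≤ 2 ^ k := Nat.pow_le_pow_right (by norm_num) hk2'
      rw [List.getD_append _ _ _ _ (by rw [length_E1]; omega),
        getD_E1 (by omega), getD_A_3pow hk2']
  rw [hL, hR] at hc
  exact delta_succ_ne n hc

end Aux

/-- For all m, n, k with 1 ≤ n < m and 1 ≤ k < m, the word
E_{1,n} δ_m E_{1,m} δ_m E_{1,k} is a palindrome if and only if n = k. -/
theorem palindrome_E1_delta_E1m_delta_E1 (m n k : ℕ)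
    (hn : 1 ≤ n) (hnm : n < m) (hk : 1 ≤ k) (hkm : k < m) :
    (E1 n ++ delta m :: E1 m ++ delta m :: E1 k).reverse =
        E1 n ++ delta m :: E1 m ++ delta m :: E1 k ↔
      n = k := by
  constructor
  · intro h
    by_contra hne
    have hrev : E1 k ++ delta m :: E1 m ++ delta m :: E1 n =
        E1 n ++ delta m :: E1 m ++ delta m :: E1 k := by
      rw [← h]
      simp [List.reverse_append, E1_palindrome, List.append_assoc]
    rcases Nat.lt_or_ge n k with h1 | h1
    · exact core m n k h1 hkm hrev.symm
    · have h2 : k < n := lt_of_le_of_ne h1 fun e => hne e.symm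
      exact core m k n h2 hnm hrev
  · rintro rfl
    simp [List.reverse_append, E1_palindrome, List.append_assoc]
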